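/- Let R be a commutative unital ring and (A,F) a filtered cochain complex of R-modules. If (A,F) is cofibrant — i.e. the unique filtered map 0 → (A,F) has the left lifting property with respect to every morphism p of filtered cochain complexes such that each restriction F^k p is a degreewise surjective quasi-isomorphism — then F^kA^n is a projective R-module for every n ∈ ℤ and every k ∈ ℕ. -/

import Mathlib

open CategoryTheory Limits ZeroObject

noncomputable section

variable (R : Type) [CommRing R]

/-- The category of unbounded cochain complexes of `R`-modules. -/
abbrev Cx := CochainComplex (ModuleCat.{0} R) ℤ



/-- The underlying module of `D_R(n)` in degree `i`: it is (isomorphic to) `R` if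
`i = n` or `i = n+1`, and the zero module otherwise. -/
abbrev diskFun (n i : ℤ) : Type := PLift (i = n ∨ i = n + 1) → R

/-- The differential of the disk complex `D_R(n)`. -/
def diskD (n i j : ℤ) : (diskFun R n i) →ₗ[R] (diskFun R n j) where
  toFun f _ := if hij : i = n ∧ j = n + 1 then f ⟨Or.inl hij.1⟩ else 0
  map_add' f g := by
    funext h
    by_cases hij : i = n ∧ j = n + 1 <;> simp [hij]
  map_smul' r f := by
    funext h
    by_cases hij : i = n ∧ j = n + 1 <;> simp [hij]

lemma diskD_apply (n i j : ℤ) (f : diskFun R n i) (h : PLift (j = n ∨ j = n + 1)) :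
    diskD R n i j f h = if hij : i = n ∧ j = n + 1 then f ⟨Or.inl hij.1⟩ else 0 := rfl

/-- The disk complex `D_R(n)`, with `R` in degrees `n` and `n+1`, the identity as the only
non-trivial differential, and `0` elsewhere. -/
def disk (n : ℤ) : Cx R where
  X i := ModuleCat.of R (diskFun R n i)
  d i j := ModuleCat.ofHom (diskD R n i j)
  shape i j hij := by
    apply ModuleCat.hom_ext
    apply LinearMap.ext
    intro f
    funext h
    have hn : ¬ (i = n ∧ j = n + 1) := by
      rintro ⟨rfl, rfl⟩
      exact hij rfl
    show diskD R n i j f h = _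
    rw [diskD_apply, dif_neg hn]
    rfl
  d_comp_d' i j k _ _ := by
    apply ModuleCat.hom_ext
    apply LinearMap.ext
    intro f
    funext h
    show diskD R n j k (diskD R n i j f) h = _
    rw [diskD_apply]
    split_ifs with hjk
    · rw [diskD_apply]
      have hn : ¬ (i = n ∧ j = n + 1) := by
        obtain ⟨h1, h2⟩ := hjk
        rintro ⟨rfl, h3⟩
        omega
      rw [dif_neg hn]
      rfl
    · rfl

/-- The underlying module of `S_R(n)` in degree `i`. -/
abbrev sphereFun (n i : ℤ) : Type := PLift (i = n) → R

/-- The sphere complex `S_R(n)`, with `R` in degree `n` and `0` elsewhere. -/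
def sphere (n : ℤ) : Cx R where
  X i := ModuleCat.of R (sphereFun R n i)
  d _ _ := 0
  shape _ _ _ := rfl
  d_comp_d' := by intros; simp

/-- The degreewise component of the map `S_R(n+1) ⟶ D_R(n)`. -/
def sphereToDiskHom (n i : ℤ) : (sphereFun R (n + 1) i) →ₗ[R] (diskFun R n i) where
  toFun g _ := if hi : i = n + 1 then g ⟨hi⟩ else 0
  map_add' g₁ g₂ := by
    funext h
    by_cases hi : i = n + 1 <;> simp [hi]
  map_smul' r g := by
    funext h
    by_cases hi : i = n + 1 <;> simp [hi]

lemma sphereToDiskHom_apply (n i : ℤ) (g : sphereFun R (n + 1) i)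
    (h : PLift (i = n ∨ i = n + 1)) :
    sphereToDiskHom R n i g h = if hi : i = n + 1 then g ⟨hi⟩ else 0 := rfl

/-- The map `S_R(n+1) ⟶ D_R(n)` which is the identity of `R` in degree `n+1`. -/
def sphereToDisk (n : ℤ) : sphere R (n + 1) ⟶ disk R n where
  f i := ModuleCat.ofHom (sphereToDiskHom R n i)
  comm' i j _ := by
    apply ModuleCat.hom_ext
    apply LinearMap.ext
    intro g
    funext h
    show diskD R n i j (sphereToDiskHom R n i g) h = sphereToDiskHom R n j ((0 : _ →ₗ[R] _) g) h
    simp only [LinearMap.zero_apply, map_zero, Pi.zero_apply]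
    rw [diskD_apply]
    split_ifs with hij
    · show (if hi : i = n + 1 then g ⟨hi⟩ else 0) = _
      have hn : ¬ i = n + 1 := by
        obtain ⟨h1, h2⟩ := hij
        omega
      rw [dif_neg hn]
    · rfl

/-- A map of cochain complexes is degreewise surjective if it is surjective in each degree. -/
def DegSurj {M N : Cx R} (p : M ⟶ N) : Prop := ∀ n : ℤ, Function.Surjective (p.f n)


/-- A filtered cochain complex of `R`-modules: a cochain complex `C` together with a
decreasing `ℕ`-indexed filtration by subcomplexes `C = F⁰C ⊇ F¹C ⊇ F²C ⊇ ⋯`. -/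
structure FCx where
  /-- the underlying cochain complex -/
  C : Cx R
  /-- the filtration, given degreewise by submodules -/
  F : ℕ → ∀ i : ℤ, Submodule R (C.X i)
  /-- the filtration is decreasing -/
  antitone : ∀ p q : ℕ, p ≤ q → ∀ i : ℤ, F q i ≤ F p i
  /-- `F⁰C = C` -/
  zero_top : ∀ i : ℤ, F 0 i = ⊤
  /-- each filtration level is a subcomplex -/
  d_stable : ∀ (p : ℕ) (i j : ℤ), ∀ x ∈ F p i, C.d i j x ∈ F p j

/-- A morphism of filtered cochain complexes: a cochain map preserving the filtrations. -/
@[ext]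
structure FHom (M N : FCx R) where
  /-- the underlying cochain map -/
  φ : M.C ⟶ N.C
  /-- compatibility with the filtrations -/
  preserves : ∀ (p : ℕ) (i : ℤ), ∀ x ∈ M.F p i, φ.f i x ∈ N.F p i

/-- The category of filtered cochain complexes of `R`-modules. -/
instance : Category (FCx R) where
  Hom M N := FHom R M N
  id M := ⟨𝟙 M.C, fun p i x hx => by simpa using hx⟩
  comp f g := ⟨f.φ ≫ g.φ, fun p i x hx => by
    have h1 := f.preserves p i x hx
    have h2 := g.preserves p i _ h1
    simpa using h2⟩
  id_comp f := by apply FHom.ext; simp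
  comp_id f := by apply FHom.ext; simp
  assoc f g h := by apply FHom.ext; simp

@[simp] lemma comp_φ {M N P : FCx R} (f : M ⟶ N) (g : N ⟶ P) :
    (f ≫ g).φ = f.φ ≫ g.φ := rfl

/-- The `p`-th level `F^p M` of the filtration, as a cochain complex. -/
def FCx.level {R : Type} [CommRing R] (M : FCx R) (p : ℕ) : Cx R where
  X i := ModuleCat.of R (M.F p i)
  d i j := ModuleCat.ofHom (LinearMap.restrict (M.C.d i j).hom (fun x hx => M.d_stable p i j x hx))
  shape i j hij := by
    apply ModuleCat.hom_ext
    apply LinearMap.ext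
    intro x
    apply Subtype.ext
    show M.C.d i j x.1 = _
    rw [M.C.shape i j hij]
    rfl
  d_comp_d' i j k _ _ := by
    apply ModuleCat.hom_ext
    apply LinearMap.ext
    intro x
    apply Subtype.ext
    show M.C.d j k (M.C.d i j x.1) = _
    have h0 : M.C.d i j ≫ M.C.d j k = 0 := M.C.d_comp_d i j k
    have h1 : M.C.d j k (M.C.d i j x.1) = (M.C.d i j ≫ M.C.d j k) x.1 := rfl
    rw [h1, h0]
    rfl

/-- The restriction `F^p f : F^p M ⟶ F^p N` of a filtered morphism to the `p`-th filtration
levels. -/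
def levelMap {R : Type} [CommRing R] {M N : FCx R} (f : M ⟶ N) (p : ℕ) :
    M.level p ⟶ N.level p where
  f i := ModuleCat.ofHom (LinearMap.restrict (f.φ.f i).hom (fun x hx => f.preserves p i x hx))
  comm' i j _ := by
    apply ModuleCat.hom_ext
    apply LinearMap.ext
    intro x
    apply Subtype.ext
    show N.C.d i j (f.φ.f i x.1) = f.φ.f j (M.C.d i j x.1)
    have h : (f.φ.f i ≫ N.C.d i j) x.1 = (M.C.d i j ≫ f.φ.f j) x.1 := by
      rw [f.φ.comm i j]
    exact h

/-- A filtered morphism is a (projective) fibration if each `F^p f` is degreewise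
surjective. -/
def FFib {M N : FCx R} (f : M ⟶ N) : Prop :=
  ∀ (p : ℕ) (i : ℤ), Function.Surjective ((levelMap f p).f i)

/-- A filtered morphism is a filtered weak equivalence if each `F^p f` is a
quasi-isomorphism, i.e. `H^n (F^p f)` is an isomorphism for all `n` and `p`. -/
def FWeq {M N : FCx R} (f : M ⟶ N) : Prop :=
  ∀ p : ℕ, QuasiIso (levelMap f p)

/-- The filtered disk `D_R(n,p)`: the complex `D_R(n)` with filtration which is everything
in filtration degrees `k ≤ p` and zero above. -/
def fdisk (n : ℤ) (p : ℕ) : FCx R where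
  C := disk R n
  F k _ := if k ≤ p then ⊤ else ⊥
  antitone a b hab i := by
    by_cases hb : b ≤ p
    · have ha : a ≤ p := le_trans hab hb
      simp [ha, hb]
    · simp [hb]
  zero_top i := by simp
  d_stable k i j x hx := by
    by_cases hk : k ≤ p
    · simp [hk]
    · simp only [if_neg hk, Submodule.mem_bot] at hx ⊢
      rw [hx]
      exact map_zero _

/-- The filtered sphere `S_R(n,p)`. -/
def fsphere (n : ℤ) (p : ℕ) : FCx R where
  C := sphere R n
  F k _ := if k ≤ p then ⊤ else ⊥
  antitone a b hab i := by
    by_cases hb : b ≤ p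
    · have ha : a ≤ p := le_trans hab hb
      simp [ha, hb]
    · simp [hb]
  zero_top i := by simp
  d_stable k i j x hx := by
    by_cases hk : k ≤ p
    · simp [hk]
    · simp only [if_neg hk, Submodule.mem_bot] at hx ⊢
      rw [hx]
      exact map_zero _

/-- The filtered map `S_R(n+1,p) ⟶ D_R(n,p)`. -/
def fsphereToDisk (n : ℤ) (p : ℕ) : fsphere R (n + 1) p ⟶ fdisk R n p where
  φ := sphereToDisk R n
  preserves k i x hx := by
    by_cases hk : k ≤ p
    · show _ ∈ (if k ≤ p then ⊤ else ⊥ : Submodule R ((disk R n).X i))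
      rw [if_pos hk]
      exact Submodule.mem_top
    · show _ ∈ (if k ≤ p then ⊤ else ⊥ : Submodule R ((disk R n).X i))
      rw [if_neg hk]
      replace hx : x = 0 := by
        have hx' : x ∈ (if k ≤ p then ⊤ else ⊥ : Submodule R ((sphere R (n + 1)).X i)) := hx
        rw [if_neg hk] at hx'
        exact (Submodule.mem_bot R).1 hx'
      refine (Submodule.mem_bot R).2 ?_
      rw [hx]
      exact map_zero _

/-- The zero filtered complex. -/
def fzero : FCx R where
  C := 0
  F _ _ := ⊤
  antitone _ _ _ _ := le_refl _
  zero_top _ := rfl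
  d_stable _ _ _ _ _ := Submodule.mem_top

/-- The unique (zero) filtered map from the zero filtered complex. -/
def fromFZero (M : FCx R) : fzero R ⟶ M where
  φ := 0
  preserves p i x _ := by
    have h : ((0 : (fzero R).C ⟶ M.C).f i) x = 0 := by
      rw [HomologicalComplex.zero_f]
      rfl
    rw [h]
    exact (M.F p i).zero_mem


/-- `f` is a retract of `g` in the arrow category: there are morphisms of arrows
`f → g → f` composing to the identity of `f`. -/
def IsRetractOf {C : Type 1} [Category.{0} C] {X Y X' Y' : C} (f : X ⟶ Y) (g : X' ⟶ Y') : Prop :=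
  ∃ (i : Arrow.mk f ⟶ Arrow.mk g) (r : Arrow.mk g ⟶ Arrow.mk f), i ≫ r = 𝟙 (Arrow.mk f)

/-- A cochain complex `A` is cofibrant if `0 ⟶ A` has the left lifting property with respect
to every degreewise surjective quasi-isomorphism. -/
def Cofibrant (A : Cx R) : Prop :=
  ∀ {X Y : Cx R} (p : X ⟶ Y), (∀ n : ℤ, Function.Surjective (p.f n)) → QuasiIso p →
    HasLiftingProperty (0 : (0 : Cx R) ⟶ A) p

/-- A filtered morphism is a cofibration if it has the left lifting property with respect to
every filtered trivial fibration, i.e. every filtered morphism which is in each filtration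
level a degreewise surjective quasi-isomorphism. -/
def FCofib {M N : FCx R} (i : M ⟶ N) : Prop :=
  ∀ {X Y : FCx R} (p : X ⟶ Y), FFib R p → FWeq R p → HasLiftingProperty i p

/-- A filtered complex `A` is cofibrant if `0 ⟶ A` has the left lifting property with
respect to every filtered trivial fibration. -/
def FCofibrant (A : FCx R) : Prop :=
  ∀ {X Y : FCx R} (p : X ⟶ Y), FFib R p → FWeq R p → HasLiftingProperty (fromFZero R A) p

/-! ### Auxiliary construction for the proof of `statement_11`. -/

section Aux

variable {R} (A : FCx R) (i : ℤ)

/-- Index type for the free module surjecting onto all filtration levels of `A` in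
degree `i`. -/
abbrev PIdx : Type := Σ j : ℕ, ↥(A.F j i)

/-- The free module on `PIdx`. -/
abbrev PMod : Type := PIdx A i →₀ R

/-- The canonical map `PMod → A^i`. -/
def piMap : PMod A i →ₗ[R] A.C.X i :=
  Finsupp.linearCombination R (fun x => (x.2 : A.C.X i))

/-- The filtration on `PMod`. -/
def FP (m : ℕ) : Submodule R (PMod A i) :=
  Finsupp.supported R R {x : PIdx A i | m ≤ x.1}

lemma FP_antitone {p q : ℕ} (h : p ≤ q) : FP A i q ≤ FP A i p :=
  Finsupp.supported_mono (fun _ hx => le_trans h hx)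

lemma FP_zero : FP A i 0 = ⊤ := by
  have h : {x : PIdx A i | 0 ≤ x.1} = Set.univ := Set.eq_univ_of_forall (fun x => Nat.zero_le x.1)
  rw [FP, h]
  exact Finsupp.supported_univ

lemma FP_projective (m : ℕ) : Module.Projective R ↥(FP A i m) :=
  Module.Projective.of_equiv
    (Finsupp.supportedEquivFinsupp {x : PIdx A i | m ≤ x.1}).symm

lemma piMap_mem (m : ℕ) {p : PMod A i} (hp : p ∈ FP A i m) : piMap A i p ∈ A.F m i := by
  rw [piMap, Finsupp.linearCombination_apply]
  refine Submodule.sum_mem _ (fun idx hidx => Submodule.smul_mem _ _ ?_)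
  exact A.antitone m idx.1 (hp hidx) i idx.2.2

lemma piMap_single (m : ℕ) (b : A.C.X i) (hb : b ∈ A.F m i) :
    piMap A i (Finsupp.single ⟨m, ⟨b, hb⟩⟩ 1) = b := by
  simp [piMap]

lemma single_mem_FP (m : ℕ) (b : A.C.X i) (hb : b ∈ A.F m i) :
    Finsupp.single (⟨m, ⟨b, hb⟩⟩ : PIdx A i) 1 ∈ FP A i m :=
  Finsupp.single_mem_supported R 1 (le_refl m)

/-- Cast along an equality of degrees. -/
def castL {n : ℤ} (h : n = i) : A.C.X n →ₗ[R] A.C.X i :=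
  Eq.rec (motive := fun z _ => A.C.X n →ₗ[R] A.C.X z) LinearMap.id h

@[simp] lemma castL_rfl (a : A.C.X i) : castL A i (rfl : i = i) a = a := rfl

lemma castL_mem {n : ℤ} (h : n = i) (m : ℕ) {a : A.C.X n} (ha : a ∈ A.F m n) :
    castL A i h a ∈ A.F m i := by subst h; exact ha

/-- The underlying type of the disk part of `X` in degree `n`. -/
abbrev DFun (n : ℤ) : Type := PLift (n = i - 1 ∨ n = i) → PMod A i

/-- The degree-`n` part of the auxiliary complex `X`, as a submodule of
`A^n × DFun n`. -/
def Xsub (n : ℤ) : Submodule R (A.C.X n × DFun A i n) where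
  carrier := {x | (∀ h : n = i, castL A i h x.1 = piMap A i (x.2 ⟨Or.inr h⟩)) ∧
    (∀ h : n = i - 1, A.C.d n i x.1 = piMap A i (x.2 ⟨Or.inl h⟩))}
  add_mem' := by
    rintro x y ⟨hx1, hx2⟩ ⟨hy1, hy2⟩
    exact ⟨fun h => by simp [map_add, hx1 h, hy1 h],
      fun h => by simp [map_add, hx2 h, hy2 h]⟩
  zero_mem' := ⟨fun h => by simp, fun h => by simp⟩
  smul_mem' := by
    rintro c x ⟨hx1, hx2⟩
    exact ⟨fun h => by simp [map_smul, hx1 h],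
      fun h => by simp [map_smul, hx2 h]⟩

/-- The differential of the disk part. -/
def dD (n m : ℤ) : (DFun A i n) →ₗ[R] (DFun A i m) where
  toFun w _ := if h : n = i - 1 ∧ m = i then w ⟨Or.inl h.1⟩ else 0
  map_add' w₁ w₂ := by
    funext h
    by_cases hc : n = i - 1 ∧ m = i <;> simp [hc]
  map_smul' r w := by
    funext h
    by_cases hc : n = i - 1 ∧ m = i <;> simp [hc]

lemma dX_mem (n m : ℤ) (x : A.C.X n × DFun A i n) (hx : x ∈ Xsub A i n) :
    ((A.C.d n m).hom.prodMap (dD A i n m)) x ∈ Xsub A i m := by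
  obtain ⟨hx1, hx2⟩ := hx
  constructor
  · intro h
    subst m
    show castL A i rfl (A.C.d n i x.1) =
      piMap A i (if hc : n = i - 1 ∧ i = i then x.2 ⟨Or.inl hc.1⟩ else 0)
    by_cases hc : n = i - 1
    · rw [dif_pos ⟨hc, rfl⟩, castL_rfl]
      exact hx2 hc
    · rw [dif_neg (by simp [hc])]
      have hn : ¬ (ComplexShape.up ℤ).Rel n i := by
        intro hr
        simp only [ComplexShape.up_Rel] at hr
        omega
      rw [A.C.shape n i hn]
      show castL A i rfl ((0 : A.C.X n →ₗ[R] A.C.X i) x.1) = piMap A i 0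
      simp
  · intro h
    show A.C.d m i (A.C.d n m x.1) =
      piMap A i (if hc : n = i - 1 ∧ m = i then x.2 ⟨Or.inl hc.1⟩ else 0)
    have hc : ¬ (n = i - 1 ∧ m = i) := by
      rintro ⟨h1, h2⟩
      omega
    rw [dif_neg hc, map_zero]
    have : A.C.d m i (A.C.d n m x.1) = (A.C.d n m ≫ A.C.d m i) x.1 := rfl
    rw [this, A.C.d_comp_d n m i]
    rfl

/-- The differential of `X`. -/
def dX (n m : ℤ) : ↥(Xsub A i n) →ₗ[R] ↥(Xsub A i m) :=
  LinearMap.restrict ((A.C.d n m).hom.prodMap (dD A i n m)) (dX_mem A i n m)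

/-- The underlying cochain complex of the auxiliary filtered complex `X`. -/
def XC : Cx R where
  X n := ModuleCat.of R ↥(Xsub A i n)
  d n m := ModuleCat.ofHom (dX A i n m)
  shape n m hnm := by
    apply ModuleCat.hom_ext
    apply LinearMap.ext
    intro x
    apply Subtype.ext
    apply Prod.ext
    · show A.C.d n m x.1.1 = 0
      rw [A.C.shape n m hnm]
      rfl
    · show dD A i n m x.1.2 = 0
      funext h
      have hc : ¬ (n = i - 1 ∧ m = i) := by
        rintro ⟨h1, h2⟩
        exact hnm (by simp only [ComplexShape.up_Rel]; omega)
      show (if hc : n = i - 1 ∧ m = i then x.1.2 ⟨Or.inl hc.1⟩ else 0) = _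
      rw [dif_neg hc]
      rfl
  d_comp_d' n m k _ _ := by
    apply ModuleCat.hom_ext
    apply LinearMap.ext
    intro x
    apply Subtype.ext
    apply Prod.ext
    · show A.C.d m k (A.C.d n m x.1.1) = 0
      have : A.C.d m k (A.C.d n m x.1.1) = (A.C.d n m ≫ A.C.d m k) x.1.1 := rfl
      rw [this, A.C.d_comp_d]
      rfl
    · show dD A i m k (dD A i n m x.1.2) = 0
      funext h
      show (if hc : m = i - 1 ∧ k = i then (dD A i n m x.1.2) ⟨Or.inl hc.1⟩ else 0) = _
      split_ifs with hc
      · show (if hc' : n = i - 1 ∧ m = i then x.1.2 ⟨Or.inl hc'.1⟩ else 0) = _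
        rw [dif_neg (by rintro ⟨h1, h2⟩; obtain ⟨h3, h4⟩ := hc; omega)]
        rfl
      · rfl

/-- The auxiliary filtered complex `X`. -/
def XF : FCx R where
  C := XC A i
  F m n := Submodule.comap (Xsub A i n).subtype
    ((A.F m n).prod (Submodule.pi Set.univ (fun _ => FP A i m)))
  antitone p q hpq n := by
    intro x hx
    obtain ⟨h1, h2⟩ := hx
    exact ⟨A.antitone p q hpq n h1, fun h hh => FP_antitone A i hpq (h2 h hh)⟩
  zero_top n := by
    ext x
    simp only [Submodule.mem_comap, Submodule.mem_prod, Submodule.mem_top, iff_true,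
      Submodule.mem_pi]
    exact ⟨by rw [A.zero_top]; trivial, fun h _ => by rw [FP_zero]; trivial⟩
  d_stable m n j x hx := by
    obtain ⟨h1, h2⟩ := hx
    constructor
    · exact A.d_stable m n j _ h1
    · intro h _
      show (if hc : n = i - 1 ∧ j = i then x.1.2 ⟨Or.inl hc.1⟩ else 0) ∈ FP A i m
      split_ifs with hc
      · exact h2 _ trivial
      · exact Submodule.zero_mem _

lemma mem_XF {m : ℕ} {n : ℤ} (x : ↥(Xsub A i n)) :
    x ∈ (XF A i).F m n ↔ (x : A.C.X n × DFun A i n).1 ∈ A.F m n ∧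
      ∀ h, (x : A.C.X n × DFun A i n).2 h ∈ FP A i m := by
  constructor
  · rintro ⟨h1, h2⟩
    exact ⟨h1, fun h => h2 h trivial⟩
  · rintro ⟨h1, h2⟩
    exact ⟨h1, fun h _ => h2 h⟩

/-- The filtered trivial fibration `q : X ⟶ A`. -/
def qF : XF A i ⟶ A where
  φ :=
    { f := fun n => ModuleCat.ofHom (LinearMap.fst R (A.C.X n) (DFun A i n) ∘ₗ (Xsub A i n).subtype)
      comm' := fun n j _ => by
        apply ModuleCat.hom_ext
        apply LinearMap.ext
        intro x
        rfl }
  preserves := fun m n x hx => hx.1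

lemma qF_level_surjective (m : ℕ) (n : ℤ) :
    Function.Surjective ((levelMap (qF A i) m).f n) := by
  rintro (⟨a, ha⟩ : ↥(A.F m n))
  by_cases hni : n = i
  · subst n
    refine ⟨⟨⟨⟨a, fun _ => Finsupp.single ⟨m, ⟨a, ha⟩⟩ 1⟩, ?_, ?_⟩, ?_⟩, rfl⟩
    · intro h
      exact (piMap_single A i m a ha).symm
    · intro h
      omega
    · exact ⟨ha, fun h _ => single_mem_FP A i m a ha⟩
  · by_cases hni' : n = i - 1
    · subst n
      refine ⟨⟨⟨⟨a, fun _ =>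
          Finsupp.single ⟨m, ⟨A.C.d (i-1) i a, A.d_stable m (i-1) i a ha⟩⟩ 1⟩, ?_, ?_⟩, ?_⟩, rfl⟩
      · intro h
        omega
      · intro h
        rw [piMap_single]
      · exact ⟨ha, fun h _ => single_mem_FP A i m _ _⟩
    · refine ⟨⟨⟨⟨a, fun _ => 0⟩, ?_, ?_⟩, ?_⟩, rfl⟩
      · intro h; omega
      · intro h; omega
      · exact ⟨ha, fun h _ => Submodule.zero_mem _⟩

lemma FFib_qF : FFib R (qF A i) := fun m n => qF_level_surjective A i m n

lemma DFun_const {n : ℤ} (w : DFun A i n) (h h' : PLift (n = i - 1 ∨ n = i)) : w h = w h' := by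
  have : h = h' := by
    cases h; cases h'; rfl
  rw [this]

lemma dD_apply (n m : ℤ) (w : DFun A i n) (h : PLift (m = i - 1 ∨ m = i)) :
    dD A i n m w h = if hc : n = i - 1 ∧ m = i then w ⟨Or.inl hc.1⟩ else 0 := rfl

lemma level_comm (m : ℕ) (n j : ℤ) (x : ↥((XF A i).F m n)) :
    (levelMap (qF A i) m).f j ((((XF A i).level m).d n j) x) =
      ((A.level m).d n j) ((levelMap (qF A i) m).f n x) := by
  have h := (levelMap (qF A i) m).comm n j
  exact (congrArg (fun f => f x) h).symm

/-- The kernel complex of `F^m q`. -/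
def KC (m : ℕ) : Cx R where
  X n := ModuleCat.of R ↥(LinearMap.ker ((levelMap (qF A i) m).f n).hom)
  d n j := ModuleCat.ofHom <| LinearMap.restrict ((((XF A i).level m).d n j).hom) (fun x hx => by
    rw [LinearMap.mem_ker] at hx ⊢
    exact (level_comm A i m n j x).trans
      ((congrArg (ConcreteCategory.hom ((A.level m).d n j)) hx).trans (map_zero _)))
  shape n j hnj := by
    apply ModuleCat.hom_ext
    apply LinearMap.ext
    intro x
    apply Subtype.ext
    show (((XF A i).level m).d n j) x.1 = _
    rw [((XF A i).level m).shape n j hnj]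
    rfl
  d_comp_d' n j k _ _ := by
    apply ModuleCat.hom_ext
    apply LinearMap.ext
    intro x
    apply Subtype.ext
    show (((XF A i).level m).d j k) ((((XF A i).level m).d n j) x.1) = _
    have h : (((XF A i).level m).d j k) ((((XF A i).level m).d n j) x.1) =
      ((((XF A i).level m).d n j) ≫ (((XF A i).level m).d j k)) x.1 := rfl
    rw [h, ((XF A i).level m).d_comp_d]
    rfl

/-- The inclusion of the kernel complex. -/
def KCι (m : ℕ) : KC A i m ⟶ (XF A i).level m where
  f n := ModuleCat.ofHom (LinearMap.ker ((levelMap (qF A i) m).f n).hom).subtype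
  comm' n j _ := by
    apply ModuleCat.hom_ext
    apply LinearMap.ext
    intro x
    rfl

/-- The short exact sequence `KC → F^m X → F^m A`. -/
def S2 (m : ℕ) : ShortComplex (Cx R) :=
  ShortComplex.mk (KCι A i m) (levelMap (qF A i) m) (by
    apply HomologicalComplex.hom_ext
    intro n
    apply ModuleCat.hom_ext
    apply LinearMap.ext
    intro x
    exact x.2)

lemma S2_shortExact (m : ℕ) : (S2 A i m).ShortExact := by
  apply HomologicalComplex.shortExact_of_degreewise_shortExact
  intro n
  have hmono : Mono (((S2 A i m).map (HomologicalComplex.eval _ _ n)).f) :=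
    (ModuleCat.mono_iff_injective _).2 Subtype.val_injective
  have hepi : Epi (((S2 A i m).map (HomologicalComplex.eval _ _ n)).g) :=
    (ModuleCat.epi_iff_surjective _).2 (qF_level_surjective A i m n)
  exact
    { exact := by
        rw [ShortComplex.moduleCat_exact_iff]
        intro x hx
        exact ⟨⟨x, LinearMap.mem_ker.mpr hx⟩, rfl⟩
      mono_f := hmono
      epi_g := hepi }

lemma KC_exactAt (m : ℕ) (n : ℤ) : (KC A i m).ExactAt n := by
  rw [(KC A i m).exactAt_iff' (n-1) n (n+1) (by simp) (by simp),
    ShortComplex.moduleCat_exact_iff]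
  intro x hx
  have ha : x.1.1.1.1 = 0 := by
    have h0 := LinearMap.mem_ker.mp x.2
    exact congrArg Subtype.val h0
  by_cases hni : n = i
  · subst n
    set wv := x.1.1.1.2 ⟨Or.inr rfl⟩ with hwv
    have hwv_mem : wv ∈ FP A i m := x.1.2.2 ⟨Or.inr rfl⟩ trivial
    have hπ : piMap A i wv = 0 := by
      have h1 := x.1.1.2.1 rfl
      rw [castL_rfl] at h1
      rw [← h1, ha]
    refine ⟨⟨⟨⟨(0, fun _ => wv), ?_, ?_⟩, ?_⟩, ?_⟩, ?_⟩
    · intro h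
      omega
    · intro h
      rw [map_zero, hπ]
    · exact ⟨Submodule.zero_mem _, fun h _ => hwv_mem⟩
    · refine LinearMap.mem_ker.mpr ?_
      apply Subtype.ext
      rfl
    · apply Subtype.ext
      apply Subtype.ext
      apply Subtype.ext
      apply Prod.ext
      · show A.C.d (i-1) i 0 = x.1.1.1.1
        rw [map_zero, ha]
      · show dD A i (i-1) i (fun _ => wv) = x.1.1.1.2
        funext h
        rw [dD_apply, dif_pos ⟨rfl, rfl⟩]
  · by_cases hni' : n = i - 1
    · subst n
      have hw : x.1.1.1.2 ⟨Or.inl rfl⟩ = 0 := by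
        have hx' : ((KC A i m).d (i - 1) (i - 1 + 1)) x = 0 := hx
        have e1 : dD A i (i-1) (i-1+1) x.1.1.1.2 = 0 := by
          exact congrArg (fun z => z.1.1.1.2) hx'
        have e2 : dD A i (i-1) (i-1+1) x.1.1.1.2 ⟨Or.inr (by omega : i - 1 + 1 = i)⟩ = 0 := by
          rw [e1]; rfl
        rw [dD_apply] at e2
        rw [dif_pos (⟨rfl, by omega⟩ : (i - 1 : ℤ) = i - 1 ∧ i - 1 + 1 = i)] at e2
        exact e2
      have hx0 : x = 0 := by
        apply Subtype.ext
        apply Subtype.ext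
        apply Subtype.ext
        apply Prod.ext
        · exact ha
        · funext h
          exact (DFun_const A i x.1.1.1.2 h ⟨Or.inl rfl⟩).trans hw
      exact ⟨0, by rw [map_zero, hx0]⟩
    · have hx0 : x = 0 := by
        apply Subtype.ext
        apply Subtype.ext
        apply Subtype.ext
        apply Prod.ext
        · exact ha
        · funext h
          exact h.down.elim (fun h1 => absurd h1 hni') (fun h1 => absurd h1 hni)
      exact ⟨0, by rw [map_zero, hx0]⟩

lemma FWeq_qF : FWeq R (qF A i) := by
  intro m
  set L := (XF A i).level m with hL
  let S1 : ShortComplex (Cx R) := ShortComplex.mk (0 : (0 : Cx R) ⟶ L) (𝟙 L) (by simp)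
  have hS1 : S1.ShortExact := by
    have hmono : Mono S1.f := ⟨fun g h _ => (isZero_zero (Cx R)).eq_of_tgt g h⟩
    have hepi : Epi S1.g := by dsimp [S1]; infer_instance
    exact
      { exact := by
          apply HomologicalComplex.exact_of_degreewise_exact
          intro n
          rw [ShortComplex.moduleCat_exact_iff]
          intro x hx
          have hx0 : x = 0 := hx
          exact ⟨0, by rw [map_zero, hx0]⟩
        mono_f := hmono
        epi_g := hepi }
  let φ : S1 ⟶ S2 A i m :=
    { τ₁ := 0
      τ₂ := 𝟙 L
      τ₃ := levelMap (qF A i) m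
      comm₁₂ := by rw [Limits.zero_comp]; exact (Category.comp_id _).symm
      comm₂₃ := by simp [S1, S2] }
  have h1 : QuasiIso φ.τ₁ := by
    rw [quasiIso_iff]
    intro n
    rw [quasiIsoAt_iff_isIso_homologyMap]
    have hz1 : IsZero (((0 : Cx R)).homology n) := by
      rw [← HomologicalComplex.exactAt_iff_isZero_homology]
      exact (HomologicalComplex.exactAt_iff _ _).2 (ShortComplex.exact_of_isZero_X₂ _
        ((HomologicalComplex.eval _ _ n).map_isZero (isZero_zero _)))
    have hz2 : IsZero ((KC A i m).homology n) := by
      rw [← HomologicalComplex.exactAt_iff_isZero_homology]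
      exact KC_exactAt A i m n
    exact ⟨⟨0, hz1.eq_of_src _ _, hz2.eq_of_src _ _⟩⟩
  have h2 : QuasiIso φ.τ₂ := by
    dsimp [φ]
    show QuasiIso (𝟙 ((XF A i).level m))
    infer_instance
  exact HomologicalComplex.HomologySequence.quasiIso_τ₃ φ hS1 (S2_shortExact A i m) h1 h2

end Aux

theorem statement_11 (A : FCx R) (hA : FCofibrant R A) :
    ∀ (k : ℕ) (i : ℤ), Module.Projective R (A.F k i) := by
  intro k i
  have hlift : HasLiftingProperty (fromFZero R A) (qF A i) :=
    hA (qF A i) (FFib_qF A i) (FWeq_qF A i)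
  have hsq : CommSq (fromFZero R (XF A i)) (fromFZero R A) (qF A i) (𝟙 A) := by
    constructor
    apply FHom.ext
    rw [comp_φ, comp_φ]
    simp [fromFZero]
  obtain ⟨l, _, hl2⟩ := (hlift.sq_hasLift hsq).exists_lift.some
  haveI := FP_projective A i k
  let u : ↥(A.F k i) →ₗ[R] ↥((XF A i).F k i) := ((levelMap l k).f i).hom
  have hcomp : ∀ x, (levelMap (qF A i) k).f i (u x) = x := by
    intro x
    apply Subtype.ext
    exact congrArg (fun f : A ⟶ A => (FHom.φ f).f i x.1) hl2
  let jmap : ↥((XF A i).F k i) →ₗ[R] ↥(FP A i k) :=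
    { toFun := fun x => ⟨x.1.1.2 ⟨Or.inr rfl⟩, x.2.2 ⟨Or.inr rfl⟩ trivial⟩
      map_add' := fun x y => rfl
      map_smul' := fun c x => rfl }
  let rmap : ↥(FP A i k) →ₗ[R] ↥((XF A i).F k i) :=
    { toFun := fun p => ⟨⟨(piMap A i p.1, fun _ => p.1),
        fun _ => rfl, fun h => absurd h (by omega)⟩,
        ⟨piMap_mem A i k p.2, fun h _ => p.2⟩⟩
      map_add' := fun p q => by
        apply Subtype.ext
        apply Subtype.ext
        apply Prod.ext
        · exact map_add _ _ _
        · rfl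
      map_smul' := fun c p => by
        apply Subtype.ext
        apply Subtype.ext
        apply Prod.ext
        · exact map_smul _ _ _
        · rfl }
  have hsplit : ∀ x : ↥((XF A i).F k i), rmap (jmap x) = x := by
    intro x
    apply Subtype.ext
    apply Subtype.ext
    apply Prod.ext
    · have h1 := x.1.2.1 rfl
      rw [castL_rfl] at h1
      exact h1.symm
    · rfl
  exact Module.Projective.of_split (jmap.comp u)
    (((levelMap (qF A i) k).f i).hom.comp rmap)
    (by
      apply LinearMap.ext
      intro x
      show (levelMap (qF A i) k).f i (rmap (jmap (u x))) = x
      rw [hsplit]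
      exact hcomp x)

end
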